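/- Verifiable decryption soundness: over a group G of prime order p with generator g, suppose a prover commits to A = g^ρ and values (v_i, B_i) and, after receiving a uniformly random challenge u ∈ ℤ_p, responds with e such that A·(g^{s})^{u} = g^{e} and B_i·v_i^{u} = h_i^{e} for all i, where g^s is a public commitment to the prover's key share s. If for some i, v_i ≠ h_i^{s}, then at most one value of u ∈ ℤ_p makes both checks pass; hence the prover succeeds with probability at most 1/p over the choice of u. -/
import Mathlib


/-- Soundness of the verifiable-decryption proof: in a group `G` of prime order `p` generated
by `g`, suppose the prover fixes `A`, `v`, `B` (and the public commitment `g^s` to its key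
share `s`) before seeing the challenge `u`, and a response `e` passes both checks
`A·(g^s)^u = g^e` and `B·v^u = h^e`. If `v ≠ h^s`, then at most one challenge `u ∈ ℤ_p` admits
a passing response; hence the prover succeeds with probability at most `1/p` over a uniformly
random challenge. -/
theorem verifiable_decryption_soundness {G : Type*} [CommGroup G] [Fintype G]
    (p : ℕ) [Fact p.Prime] (hcard : Fintype.card G = p)
    (g : G) (hg : ∀ x : G, x ∈ Subgroup.zpowers g)
    (h A v B : G) (s : ZMod p) (hv : v ≠ h ^ s.val) :
    Nat.card {u : ZMod p // ∃ e : ZMod p,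
        A * (g ^ s.val) ^ u.val = g ^ e.val ∧ B * v ^ u.val = h ^ e.val} ≤ 1 ∧
    (PMF.uniformOfFintype (ZMod p)).toOuterMeasure
        {u : ZMod p | ∃ e : ZMod p,
          A * (g ^ s.val) ^ u.val = g ^ e.val ∧ B * v ^ u.val = h ^ e.val} ≤ (p : ENNReal)⁻¹ := by
  have hp : p.Prime := Fact.out
  have hog : orderOf g = p := by
    rw [orderOf_eq_card_of_forall_mem_zpowers hg, Nat.card_eq_fintype_card, hcard]
  have hcast : ∀ m n : ℕ, g ^ m = g ^ n ↔ (m : ZMod p) = (n : ZMod p) := fun m n => by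
    rw [pow_eq_pow_iff_modEq, hog, ← ZMod.natCast_eq_natCast_iff]
  have exp : ∀ x : G, ∃ n : ℕ, g ^ n = x := fun x => by
    have := (mem_powers_iff_mem_zpowers).2 (hg x)
    exact (Submonoid.mem_powers_iff x g).1 this
  obtain ⟨a, ha⟩ := exp h
  obtain ⟨ρ, hρ⟩ := exp A
  obtain ⟨β, hβ⟩ := exp v
  obtain ⟨b, hb⟩ := exp B
  -- v ≠ h ^ s.val translated
  have hvc : (β : ZMod p) ≠ (a : ZMod p) * s := by
    intro hc
    apply hv
    rw [← hβ, ← ha, ← pow_mul, hcast]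
    push_cast [ZMod.natCast_val, ZMod.cast_id]
    exact hc
  have key : ∀ u : ZMod p, (∃ e : ZMod p,
      A * (g ^ s.val) ^ u.val = g ^ e.val ∧ B * v ^ u.val = h ^ e.val) →
      ((β : ZMod p) - (a : ZMod p) * s) * u = (a : ZMod p) * ρ - b := by
    rintro u ⟨e, h1, h2⟩
    rw [← hρ, ← pow_mul, ← pow_add, hcast] at h1
    rw [← hb, ← hβ, ← ha, ← pow_mul, ← pow_add, ← pow_mul, hcast] at h2
    push_cast [ZMod.natCast_val, ZMod.cast_id] at h1 h2
    linear_combination h2 - (a : ZMod p) * h1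
  have huniq : ∀ u1 u2 : ZMod p,
      (∃ e : ZMod p, A * (g ^ s.val) ^ u1.val = g ^ e.val ∧ B * v ^ u1.val = h ^ e.val) →
      (∃ e : ZMod p, A * (g ^ s.val) ^ u2.val = g ^ e.val ∧ B * v ^ u2.val = h ^ e.val) →
      u1 = u2 := by
    intro u1 u2 hu1 hu2
    have k1 := key u1 hu1
    have k2 := key u2 hu2
    have hne : ((β : ZMod p) - (a : ZMod p) * s) ≠ 0 := sub_ne_zero.2 hvc
    have : ((β : ZMod p) - (a : ZMod p) * s) * u1 =
        ((β : ZMod p) - (a : ZMod p) * s) * u2 := by rw [k1, k2]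
    exact mul_left_cancel₀ hne this
  constructor
  · refine Finite.card_le_one_iff_subsingleton.2 ⟨?_⟩
    rintro ⟨u1, hu1⟩ ⟨u2, hu2⟩
    exact Subtype.ext (huniq u1 u2 hu1 hu2)
  · set S : Set (ZMod p) := {u : ZMod p | ∃ e : ZMod p,
      A * (g ^ s.val) ^ u.val = g ^ e.val ∧ B * v ^ u.val = h ^ e.val}
    rcases S.eq_empty_or_nonempty with hS | ⟨u0, hu0⟩
    · simp [hS]
    · have hsub : S ⊆ {u0} := fun u hu => huniq u u0 hu hu0
      calc (PMF.uniformOfFintype (ZMod p)).toOuterMeasure S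
          ≤ (PMF.uniformOfFintype (ZMod p)).toOuterMeasure {u0} :=
            (PMF.uniformOfFintype (ZMod p)).toOuterMeasure.mono hsub
        _ = (PMF.uniformOfFintype (ZMod p)) u0 := PMF.toOuterMeasure_apply_singleton _ _
        _ = (p : ENNReal)⁻¹ := by
            rw [PMF.uniformOfFintype_apply, ZMod.card]
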